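/- Let n be a positive natural number, R > 0 and t > 0, and write s_t = 1 - e^{-2t}. Let p₀ and q₀ be probability density functions on ℝⁿ that vanish outside the closed ball of radius R centered at the origin, and define p_t(x) = ∫_{ℝⁿ} (2π s_t)^{-n/2} · exp( -‖x - e^{-t}x₀‖²/(2 s_t) ) · p₀(x₀) dx₀ and q_t analogously with q₀ in place of p₀. Then the relative Fisher information satisfies I(p_t ‖ q_t) = ∫_{ℝⁿ} p_t(x) · ‖∇ log p_t(x) - ∇ log q_t(x)‖² dx ≤ 4R² · e^{-2t}/(1 - e^{-2t})². -/

import Mathlib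

open MeasureTheory Real
open scoped BigOperators
open scoped InnerProductSpace

noncomputable section


lemma aux_r_exp_le {s : ℝ} (hs : 0 < s) (r : ℝ) (hr : 0 ≤ r) :
    r * rexp (-r ^ 2 / (2 * s)) ≤ Real.sqrt (2 * s) := by
  have h2s : 0 < 2 * s := by linarith
  rw [neg_div]
  rcases le_or_gt r (Real.sqrt (2 * s)) with h | h
  · calc r * rexp (-(r ^ 2 / (2 * s))) ≤ r * 1 := by
          have h1 : rexp (-(r ^ 2 / (2 * s))) ≤ 1 := by
            rw [Real.exp_le_one_iff]
            have : 0 ≤ r ^ 2 / (2 * s) := by positivity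
            linarith
          nlinarith
        _ ≤ Real.sqrt (2 * s) := by linarith
  · have hrpos : 0 < r := lt_of_le_of_lt (Real.sqrt_nonneg _) h
    have hub : rexp (-(r ^ 2 / (2 * s))) ≤ 2 * s / r ^ 2 := by
      rw [Real.exp_neg, inv_le_comm₀ (Real.exp_pos _) (by positivity)]
      have := Real.add_one_le_exp (r ^ 2 / (2 * s))
      calc (2 * s / r ^ 2)⁻¹ = r ^ 2 / (2 * s) := by field_simp
        _ ≤ rexp (r ^ 2 / (2 * s)) := by linarith
    calc r * rexp (-(r ^ 2 / (2 * s))) ≤ r * (2 * s / r ^ 2) := by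
          nlinarith [Real.exp_pos (-(r ^ 2 / (2 * s)))]
      _ = 2 * s / r := by field_simp
      _ ≤ Real.sqrt (2 * s) := by
          rw [div_le_iff₀ hrpos]
          nlinarith [Real.sq_sqrt h2s.le, Real.sqrt_nonneg (2 * s), h]

variable {V : Type*} [NormedAddCommGroup V] [InnerProductSpace ℝ V] [FiniteDimensional ℝ V]
  [MeasurableSpace V] [BorelSpace V]

lemma integrable_gauss {b : ℝ} (hb : 0 < b) :
    Integrable (fun v : V => rexp (-b * ‖v‖ ^ 2)) := by
  have h := (GaussianFourier.integrable_cexp_neg_mul_sq_norm_add (V := V)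
    (b := (b : ℂ)) (by simpa using hb) 0 0).norm
  refine h.congr (Filter.Eventually.of_forall fun v => ?_)
  simp [Complex.norm_exp, Real.abs_exp]
  exact Or.inl (by norm_cast)


lemma ou_marginal {n : ℕ} {s ε : ℝ} (hs : 0 < s)
    (f : EuclideanSpace ℝ (Fin n) → ℝ) (hnn : ∀ x, 0 ≤ f x) (hint : Integrable f)
    (hone : ∫ x, f x = 1)
    (ft : EuclideanSpace ℝ (Fin n) → ℝ)
    (hft : ∀ x, ft x = ∫ x₀, (2 * π * s) ^ (-(n : ℝ) / 2) *
        rexp (-‖x - ε • x₀‖ ^ 2 / (2 * s)) * f x₀) :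
    Integrable ft ∧ ∫ x, ft x = 1 := by
  let E := EuclideanSpace ℝ (Fin n)
  set c : ℝ := (2 * π * s) ^ (-(n : ℝ) / 2) with hc_def
  have hc : 0 < c := Real.rpow_pos_of_pos (by positivity) _
  set b : ℝ := (2 * s)⁻¹ with hb_def
  have hb : 0 < b := by positivity
  have hKform : ∀ v : E, rexp (-‖v‖ ^ 2 / (2 * s)) = rexp (-b * ‖v‖ ^ 2) := by
    intro v; congr 1; rw [hb_def]; ring
  set I : ℝ := ∫ v : E, rexp (-b * ‖v‖ ^ 2) with hI_def
  have hKint : Integrable (fun v : E => rexp (-b * ‖v‖ ^ 2)) := integrable_gauss hb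
  have hcI : c * I = 1 := by
    have h1 : I = (2 * π * s) ^ ((n : ℝ) / 2) := by
      rw [hI_def, GaussianFourier.integral_rexp_neg_mul_sq_norm hb]
      rw [finrank_euclideanSpace_fin]
      congr 1
      rw [hb_def]; field_simp
    rw [h1, hc_def, ← Real.rpow_add (by positivity)]
    rw [show (-(n:ℝ) / 2 + (n:ℝ) / 2) = 0 by ring, Real.rpow_zero]
  set F : E × E → ℝ := fun z => c * rexp (-‖z.1 - ε • z.2‖ ^ 2 / (2 * s)) * f z.2 with hF_def
  have hcont : Continuous fun z : E × E => c * rexp (-‖z.1 - ε • z.2‖ ^ 2 / (2 * s)) := by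
    fun_prop
  have hFm : AEStronglyMeasurable F (volume.prod volume) :=
    hcont.aestronglyMeasurable.mul hint.1.comp_snd
  have hslice : ∀ x₀ : E, (fun x => F (x, x₀)) =
      fun x => (c * f x₀) * rexp (-b * ‖x - ε • x₀‖ ^ 2) := by
    intro x₀; funext x; rw [hF_def]; simp only; rw [hKform]; ring
  have hsliceInt : ∀ x₀ : E, Integrable (fun x => F (x, x₀)) := by
    intro x₀
    rw [hslice x₀]
    exact (hKint.comp_sub_right (ε • x₀)).const_mul _
  have hsliceVal : ∀ x₀ : E, ∫ x, F (x, x₀) = (c * I) * f x₀ := by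
    intro x₀
    rw [hslice x₀, integral_const_mul,
      integral_sub_right_eq_self (fun v : E => rexp (-b * ‖v‖ ^ 2)) (ε • x₀)]
    rw [← hI_def]; ring
  have hFnn : ∀ z : E × E, 0 ≤ F z := by
    intro z; rw [hF_def]; simp only
    have := hnn z.2
    positivity
  have hFint : Integrable F (volume.prod volume) := by
    rw [integrable_prod_iff' hFm]
    constructor
    · exact Filter.Eventually.of_forall hsliceInt
    · have heq : (fun x₀ => ∫ x, ‖F (x, x₀)‖) = fun x₀ => (c * I) * f x₀ := by
        funext x₀
        have : (fun x => ‖F (x, x₀)‖) = fun x => F (x, x₀) := by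
          funext x; exact norm_of_nonneg (hFnn _)
        rw [this, hsliceVal]
      rw [heq]
      exact hint.const_mul _
  have hftF : ft = fun x => ∫ x₀, F (x, x₀) := by
    funext x; rw [hft x]
  constructor
  · rw [hftF]; exact hFint.integral_prod_left
  · rw [hftF]
    rw [integral_integral_swap (f := fun x x₀ => F (x, x₀)) hFint]
    calc ∫ x₀, ∫ x, F (x, x₀) = ∫ x₀, (c * I) * f x₀ := by
          exact integral_congr_ae (Filter.Eventually.of_forall fun x₀ => hsliceVal x₀)
      _ = (c * I) * ∫ x₀, f x₀ := integral_const_mul _ _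
      _ = 1 := by rw [hone, hcI]; ring

set_option maxHeartbeats 2000000 in
lemma ou_score {n : ℕ} {s ε R : ℝ} (hs : 0 < s) (hε : 0 < ε) (hR : 0 < R)
    (f : EuclideanSpace ℝ (Fin n) → ℝ) (hnn : ∀ x, 0 ≤ f x) (hint : Integrable f)
    (hone : ∫ x, f x = 1)
    (hsupp : ∀ x, R < ‖x‖ → f x = 0)
    (ft : EuclideanSpace ℝ (Fin n) → ℝ)
    (hft : ∀ x, ft x = ∫ x₀, (2 * π * s) ^ (-(n : ℝ) / 2) *
        rexp (-‖x - ε • x₀‖ ^ 2 / (2 * s)) * f x₀)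
    (x : EuclideanSpace ℝ (Fin n)) :
    ∃ u : EuclideanSpace ℝ (Fin n), ‖u‖ ≤ ε * R ∧
      gradient (fun y => Real.log (ft y)) x = s⁻¹ • u - s⁻¹ • x := by
  set c : ℝ := (2 * π * s) ^ (-(n : ℝ) / 2) with hc_def
  have hc : 0 < c := Real.rpow_pos_of_pos (by positivity) _
  -- the weight function
  set w : EuclideanSpace ℝ (Fin n) → ℝ :=
    fun x₀ => c * rexp (-‖x - ε • x₀‖ ^ 2 / (2 * s)) * f x₀ with hw_def
  have hw_nn : ∀ x₀, 0 ≤ w x₀ := by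
    intro x₀; rw [hw_def]; simp only
    have := hnn x₀; positivity
  have hcontK : ∀ y : EuclideanSpace ℝ (Fin n),
      Continuous fun x₀ : EuclideanSpace ℝ (Fin n) =>
        c * rexp (-‖y - ε • x₀‖ ^ 2 / (2 * s)) := by
    intro y; fun_prop
  have hw_meas : AEStronglyMeasurable w volume :=
    ((hcontK x).aestronglyMeasurable).mul hint.1
  have hexp_le_one : ∀ (y x₀ : EuclideanSpace ℝ (Fin n)),
      rexp (-‖y - ε • x₀‖ ^ 2 / (2 * s)) ≤ 1 := by
    intro y x₀
    rw [Real.exp_le_one_iff, neg_div]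
    have : 0 ≤ ‖y - ε • x₀‖ ^ 2 / (2 * s) := by positivity
    linarith
  have hw_int : Integrable w := by
    refine hint.bdd_mul (hcontK x).aestronglyMeasurable (c := c) (Filter.Eventually.of_forall fun x₀ => ?_)
    rw [Real.norm_eq_abs, abs_of_pos (by positivity)]
    calc c * rexp (-‖x - ε • x₀‖ ^ 2 / (2 * s)) ≤ c * 1 :=
          mul_le_mul_of_nonneg_left (hexp_le_one x x₀) hc.le
      _ = c := mul_one c
  have hftx : ft x = ∫ x₀, w x₀ := hft x
  -- positivity of ft x
  have hpos : 0 < ft x := by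
    rw [hftx]
    have hfsupp : 0 < volume (Function.support f) := by
      have := (integral_pos_iff_support_of_nonneg_ae
        (Filter.Eventually.of_forall hnn) hint).1 (by rw [hone]; norm_num)
      exact this
    refine (integral_pos_iff_support_of_nonneg_ae
      (Filter.Eventually.of_forall hw_nn) hw_int).2 ?_
    have hss : Function.support w = Function.support f := by
      ext x₀
      simp only [Function.mem_support, hw_def]
      constructor
      · intro h hf0; apply h; rw [hf0]; ring
      · intro h hf0
        apply h
        have hK : 0 < c * rexp (-‖x - ε • x₀‖ ^ 2 / (2 * s)) := by positivity
        rcases mul_eq_zero.1 hf0 with h1 | h1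
        · exact absurd h1 hK.ne'
        · exact h1
    rwa [hss]
  -- constant for bounds
  set M : ℝ := s⁻¹ * c * Real.sqrt (2 * s) with hM_def
  have hM : ∀ (y x₀ : EuclideanSpace ℝ (Fin n)),
      s⁻¹ * (c * rexp (-‖y - ε • x₀‖ ^ 2 / (2 * s)) * f x₀) * ‖ε • x₀ - y‖ ≤ M * f x₀ := by
    intro y x₀
    rw [show ‖(ε • x₀ - y : EuclideanSpace ℝ (Fin n))‖ = ‖y - ε • x₀‖ from norm_sub_rev _ _]
    have hkey := aux_r_exp_le hs ‖y - ε • x₀‖ (norm_nonneg _)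
    have hfac : 0 ≤ s⁻¹ * c * f x₀ := by have := hnn x₀; positivity
    calc s⁻¹ * (c * rexp (-‖y - ε • x₀‖ ^ 2 / (2 * s)) * f x₀) * ‖y - ε • x₀‖
        = (s⁻¹ * c * f x₀) * (‖y - ε • x₀‖ * rexp (-‖y - ε • x₀‖ ^ 2 / (2 * s))) := by ring
      _ ≤ (s⁻¹ * c * f x₀) * Real.sqrt (2 * s) := mul_le_mul_of_nonneg_left hkey hfac
      _ = M * f x₀ := by rw [hM_def]; ring
  -- pointwise derivative
  set F' : EuclideanSpace ℝ (Fin n) → EuclideanSpace ℝ (Fin n) →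
      (EuclideanSpace ℝ (Fin n) →L[ℝ] ℝ) :=
    fun y x₀ => (s⁻¹ * (c * rexp (-‖y - ε • x₀‖ ^ 2 / (2 * s)) * f x₀)) •
      innerSL ℝ (ε • x₀ - y) with hF'_def
  have hF'_norm : ∀ y x₀, ‖F' y x₀‖ ≤ M * f x₀ := by
    intro y x₀
    have h1 : F' y x₀ = (s⁻¹ * (c * rexp (-‖y - ε • x₀‖ ^ 2 / (2 * s)) * f x₀)) •
        innerSL ℝ (ε • x₀ - y) := by rw [hF'_def]
    calc ‖F' y x₀‖ ≤ ‖s⁻¹ * (c * rexp (-‖y - ε • x₀‖ ^ 2 / (2 * s)) * f x₀)‖ *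
          ‖innerSL ℝ (ε • x₀ - y)‖ := by
            rw [h1]
            exact norm_smul_le (s⁻¹ * (c * rexp (-‖y - ε • x₀‖ ^ 2 / (2 * s)) * f x₀)) (innerSL ℝ (ε • x₀ - y))
      _ = s⁻¹ * (c * rexp (-‖y - ε • x₀‖ ^ 2 / (2 * s)) * f x₀) * ‖ε • x₀ - y‖ := by
          rw [innerSL_apply_norm, Real.norm_eq_abs,
            abs_of_nonneg (by have := hnn x₀; positivity)]
      _ ≤ M * f x₀ := hM y x₀
  have hderiv : ∀ (y x₀ : EuclideanSpace ℝ (Fin n)),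
      HasFDerivAt (fun z => c * rexp (-‖z - ε • x₀‖ ^ 2 / (2 * s)) * f x₀) (F' y x₀) y := by
    intro y x₀
    have h1 : HasFDerivAt (fun z : EuclideanSpace ℝ (Fin n) => z - ε • x₀)
        (ContinuousLinearMap.id ℝ _) y := (hasFDerivAt_id y).sub_const _
    have h2 := h1.norm_sq
    have h3 := h2.const_mul (-(2 * s)⁻¹)
    have h4 := h3.exp
    have h5 := (h4.const_mul c).mul_const (f x₀)
    have hfun : (fun z : EuclideanSpace ℝ (Fin n) =>
        c * rexp (-(2 * s)⁻¹ * ‖z - ε • x₀‖ ^ 2) * f x₀) =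
        fun z => c * rexp (-‖z - ε • x₀‖ ^ 2 / (2 * s)) * f x₀ := by
      funext z
      rw [show -(2 * s)⁻¹ * ‖z - ε • x₀‖ ^ 2 = -‖z - ε • x₀‖ ^ 2 / (2 * s) by ring]
    rw [hfun] at h5
    have hD : f x₀ •
        (c • (rexp (-(2 * s)⁻¹ * ‖y - ε • x₀‖ ^ 2) •
          ((-(2 * s)⁻¹) • (2 • ((innerSL ℝ (y - ε • x₀)).comp (ContinuousLinearMap.id ℝ _)))))) =
        F' y x₀ := by
      rw [hF'_def]
      ext v
      simp only [ContinuousLinearMap.smul_apply, ContinuousLinearMap.comp_apply,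
        ContinuousLinearMap.coe_id', id_eq, innerSL_apply_apply, smul_eq_mul]
      rw [show (ε • x₀ - y : EuclideanSpace ℝ (Fin n)) = -(y - ε • x₀) by abel,
        inner_neg_left,
        show -(2 * s)⁻¹ * ‖y - ε • x₀‖ ^ 2 = -‖y - ε • x₀‖ ^ 2 / (2 * s) by ring]
      ring
    rw [hD] at h5
    exact h5
  -- a.e. measurability of F' x
  have hcontG : Continuous fun x₀ : EuclideanSpace ℝ (Fin n) =>
      ((s⁻¹ * c) * rexp (-‖x - ε • x₀‖ ^ 2 / (2 * s))) • innerSL ℝ (ε • x₀ - x) := by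
    apply Continuous.fun_smul
    · fun_prop
    · exact (innerSL ℝ).continuous.comp (by fun_prop)
  have hF'x_eq : F' x = fun x₀ => f x₀ •
      (((s⁻¹ * c) * rexp (-‖x - ε • x₀‖ ^ 2 / (2 * s))) • innerSL ℝ (ε • x₀ - x)) := by
    funext x₀
    rw [hF'_def]
    simp only
    rw [smul_smul]
    congr 1
    ring
  have hF'meas : AEStronglyMeasurable (F' x) volume := by
    rw [hF'x_eq]
    exact hint.1.smul hcontG.aestronglyMeasurable
  -- differentiation under the integral sign
  have hDer : HasFDerivAt (fun y => ∫ x₀, c * rexp (-‖y - ε • x₀‖ ^ 2 / (2 * s)) * f x₀)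
      (∫ x₀, F' x x₀) x := by
    apply hasFDerivAt_integral_of_dominated_of_fderiv_le (F' := F')
      (bound := fun x₀ => M * f x₀) (s := Metric.ball x 1) (Metric.ball_mem_nhds x one_pos)
    · exact Filter.Eventually.of_forall fun y =>
        ((hcontK y).aestronglyMeasurable).mul hint.1
    · exact hw_int
    · exact hF'meas
    · exact Filter.Eventually.of_forall fun x₀ => fun y _ => hF'_norm y x₀
    · exact hint.const_mul M
    · exact Filter.Eventually.of_forall fun x₀ => fun y _ => hderiv y x₀
  have hftfun : (fun y => ∫ x₀, c * rexp (-‖y - ε • x₀‖ ^ 2 / (2 * s)) * f x₀) = ft := by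
    funext y; exact (hft y).symm
  rw [hftfun] at hDer
  -- the gradient vector
  set g : EuclideanSpace ℝ (Fin n) → EuclideanSpace ℝ (Fin n) :=
    fun x₀ => (s⁻¹ * w x₀) • (ε • x₀ - x) with hg_def
  have hg_meas : AEStronglyMeasurable g volume := by
    have : g = fun x₀ => f x₀ •
        (((s⁻¹ * c) * rexp (-‖x - ε • x₀‖ ^ 2 / (2 * s))) • (ε • x₀ - x)) := by
      funext x₀
      rw [hg_def, hw_def]
      simp only
      rw [smul_smul]
      congr 1
      ring
    rw [this]
    exact hint.1.smul (by fun_prop : Continuous fun x₀ : EuclideanSpace ℝ (Fin n) =>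
      ((s⁻¹ * c) * rexp (-‖x - ε • x₀‖ ^ 2 / (2 * s))) • (ε • x₀ - x)).aestronglyMeasurable
  have hg_norm : ∀ x₀, ‖g x₀‖ ≤ M * f x₀ := by
    intro x₀
    rw [hg_def]
    simp only
    rw [norm_smul, Real.norm_eq_abs, abs_of_nonneg (by have := hw_nn x₀; positivity)]
    rw [hw_def]
    exact hM x x₀
  have hg_int : Integrable g :=
    Integrable.mono' (hint.const_mul M) hg_meas (Filter.Eventually.of_forall hg_norm)
  have hF'int : Integrable (F' x) :=
    Integrable.mono' (hint.const_mul M) hF'meas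
      (Filter.Eventually.of_forall fun x₀ => hF'_norm x x₀)
  -- the integral of F' x equals toDual of ∫ g
  have hInt_eq : ∫ x₀, F' x x₀ = InnerProductSpace.toDual ℝ _ (∫ x₀, g x₀) := by
    apply ContinuousLinearMap.ext
    intro v
    rw [ContinuousLinearMap.integral_apply hF'int]
    have h1 : ∀ x₀, F' x x₀ v = ⟪v, g x₀⟫_ℝ := by
      intro x₀
      have h2 : ⟪v, g x₀⟫_ℝ = (s⁻¹ * w x₀) * ⟪ε • x₀ - x, v⟫_ℝ := by
        rw [show ⟪v, g x₀⟫_ℝ = ⟪g x₀, v⟫_ℝ from real_inner_comm _ _, hg_def]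
        exact real_inner_smul_left _ _ _
      rw [h2, hF'_def, hw_def]
      simp only [ContinuousLinearMap.smul_apply, innerSL_apply_apply, smul_eq_mul]
    calc ∫ x₀, F' x x₀ v = ∫ x₀, ⟪v, g x₀⟫_ℝ :=
          integral_congr_ae (Filter.Eventually.of_forall h1)
      _ = ⟪v, ∫ x₀, g x₀⟫_ℝ := integral_inner hg_int v
      _ = InnerProductSpace.toDual ℝ _ (∫ x₀, g x₀) v := by
          rw [InnerProductSpace.toDual_apply_apply, real_inner_comm]
  rw [hInt_eq] at hDer
  -- gradient of log ∘ ft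
  have hlog : HasFDerivAt (fun y => Real.log (ft y))
      ((ft x)⁻¹ • (InnerProductSpace.toDual ℝ _ (∫ x₀, g x₀))) x := hDer.log hpos.ne'
  have hlogGrad : HasGradientAt (fun y => Real.log (ft y)) ((ft x)⁻¹ • ∫ x₀, g x₀) x := by
    rw [hasGradientAt_iff_hasFDerivAt, _root_.map_smul]
    exact hlog
  have hgradval : gradient (fun y => Real.log (ft y)) x = (ft x)⁻¹ • ∫ x₀, g x₀ :=
    hlogGrad.gradient
  -- split the integral
  set m : EuclideanSpace ℝ (Fin n) := ∫ x₀, w x₀ • (ε • x₀) with hm_def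
  have hm_meas : AEStronglyMeasurable (fun x₀ => w x₀ • (ε • x₀ : EuclideanSpace ℝ (Fin n)))
      volume := hw_meas.smul (by fun_prop :
        Continuous fun x₀ : EuclideanSpace ℝ (Fin n) => ε • x₀).aestronglyMeasurable
  have hm_bound : ∀ x₀, ‖w x₀ • (ε • x₀ : EuclideanSpace ℝ (Fin n))‖ ≤ (ε * R) * w x₀ := by
    intro x₀
    rw [norm_smul, norm_smul, Real.norm_eq_abs, Real.norm_eq_abs,
      abs_of_nonneg (hw_nn x₀), abs_of_pos hε]
    rcases le_or_gt ‖x₀‖ R with h | h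
    · have h0 : 0 ≤ w x₀ := hw_nn x₀
      have h2 : ε * ‖x₀‖ ≤ ε * R := mul_le_mul_of_nonneg_left h hε.le
      calc w x₀ * (ε * ‖x₀‖) ≤ w x₀ * (ε * R) := mul_le_mul_of_nonneg_left h2 h0
        _ = ε * R * w x₀ := by ring
    · have hf0 : f x₀ = 0 := hsupp x₀ h
      have hw0 : w x₀ = 0 := by rw [hw_def]; simp only; rw [hf0]; ring
      rw [hw0]
      ring_nf
      positivity
  have hm_int : Integrable (fun x₀ => w x₀ • (ε • x₀ : EuclideanSpace ℝ (Fin n))) :=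
    Integrable.mono' (hw_int.const_mul (ε * R)) hm_meas (Filter.Eventually.of_forall hm_bound)
  have hm_norm : ‖m‖ ≤ ε * R * ft x := by
    rw [hm_def, hftx]
    calc ‖∫ x₀, w x₀ • (ε • x₀ : EuclideanSpace ℝ (Fin n))‖
        ≤ ∫ x₀, ‖w x₀ • (ε • x₀ : EuclideanSpace ℝ (Fin n))‖ := norm_integral_le_integral_norm _
      _ ≤ ∫ x₀, (ε * R) * w x₀ :=
          integral_mono hm_int.norm (hw_int.const_mul _) hm_bound
      _ = ε * R * ∫ x₀, w x₀ := integral_const_mul _ _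
  have hsplit : ∫ x₀, g x₀ = s⁻¹ • (m - (ft x) • x) := by
    have hgeq : g = fun x₀ => s⁻¹ • (w x₀ • (ε • x₀) - w x₀ • x) := by
      funext x₀
      rw [hg_def]
      simp only
      module
    rw [hgeq, integral_smul, integral_sub hm_int (hw_int.smul_const x),
      integral_smul_const, hm_def, hftx]
  refine ⟨(ft x)⁻¹ • m, ?_, ?_⟩
  · rw [norm_smul, Real.norm_eq_abs, abs_of_pos (by positivity)]
    calc (ft x)⁻¹ * ‖m‖ ≤ (ft x)⁻¹ * (ε * R * ft x) :=
          mul_le_mul_of_nonneg_left hm_norm (by positivity)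
      _ = ε * R := by field_simp
  · rw [hgradval, hsplit]
    have hne : ft x ≠ 0 := hpos.ne'
    match_scalars <;> (field_simp; try ring)


/-- Fisher-information bound for the Ornstein–Uhlenbeck process
(used in the paper's Theorem 13): for the OU marginals `p_t, q_t` of two initial
densities supported in the closed ball of radius `R`,
`I(p_t ‖ q_t) = ∫ p_t ‖∇log p_t - ∇log q_t‖² ≤ 4R² e^{-2t}/(1 - e^{-2t})²`. -/
theorem ou_fisher_information_bound
    (n : ℕ) (hn : 0 < n) (R t : ℝ) (hR : 0 < R) (ht : 0 < t)
    (p₀ q₀ : EuclideanSpace ℝ (Fin n) → ℝ)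
    (hp₀nonneg : ∀ x, 0 ≤ p₀ x) (hq₀nonneg : ∀ x, 0 ≤ q₀ x)
    (hp₀int : Integrable p₀) (hq₀int : Integrable q₀)
    (hp₀one : ∫ x, p₀ x = 1) (hq₀one : ∫ x, q₀ x = 1)
    (hp₀supp : ∀ x, x ∉ Metric.closedBall (0 : EuclideanSpace ℝ (Fin n)) R → p₀ x = 0)
    (hq₀supp : ∀ x, x ∉ Metric.closedBall (0 : EuclideanSpace ℝ (Fin n)) R → q₀ x = 0)
    (pt qt : EuclideanSpace ℝ (Fin n) → ℝ)
    (hpt : ∀ x, pt x =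
      ∫ x₀, (2 * π * (1 - Real.exp (-2 * t))) ^ (-(n : ℝ) / 2) *
        Real.exp (-‖x - Real.exp (-t) • x₀‖ ^ 2 / (2 * (1 - Real.exp (-2 * t)))) * p₀ x₀)
    (hqt : ∀ x, qt x =
      ∫ x₀, (2 * π * (1 - Real.exp (-2 * t))) ^ (-(n : ℝ) / 2) *
        Real.exp (-‖x - Real.exp (-t) • x₀‖ ^ 2 / (2 * (1 - Real.exp (-2 * t)))) * q₀ x₀) :
    (∫ x, pt x *
        ‖gradient (fun y => Real.log (pt y)) x
          - gradient (fun y => Real.log (qt y)) x‖ ^ 2)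
      ≤ 4 * R ^ 2 * Real.exp (-2 * t) / (1 - Real.exp (-2 * t)) ^ 2 := by
  set s : ℝ := 1 - Real.exp (-2 * t) with hs_def
  set ε : ℝ := Real.exp (-t) with hε_def
  have hs : 0 < s := by
    rw [hs_def]
    have : rexp (-2 * t) < 1 := by
      rw [Real.exp_lt_one_iff]
      linarith
    linarith
  have hε : 0 < ε := Real.exp_pos _
  have hp₀supp' : ∀ x : EuclideanSpace ℝ (Fin n), R < ‖x‖ → p₀ x = 0 := by
    intro x hx
    refine hp₀supp x ?_
    intro hmem
    rw [Metric.mem_closedBall, dist_zero_right] at hmem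
    linarith
  have hq₀supp' : ∀ x : EuclideanSpace ℝ (Fin n), R < ‖x‖ → q₀ x = 0 := by
    intro x hx
    refine hq₀supp x ?_
    intro hmem
    rw [Metric.mem_closedBall, dist_zero_right] at hmem
    linarith
  obtain ⟨hptInt, hptOne⟩ := ou_marginal hs p₀ hp₀nonneg hp₀int hp₀one pt hpt
  choose up hup hgradp using fun x => ou_score hs hε hR p₀ hp₀nonneg hp₀int hp₀one hp₀supp' pt hpt x
  choose uq huq hgradq using fun x => ou_score hs hε hR q₀ hq₀nonneg hq₀int hq₀one hq₀supp' qt hqt x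
  set C : ℝ := (s⁻¹ * (2 * ε * R)) ^ 2 with hC_def
  have hptnn : ∀ x, 0 ≤ pt x := by
    intro x
    rw [hpt x]
    refine integral_nonneg fun x₀ => ?_
    have := hp₀nonneg x₀
    positivity
  have hdiff : ∀ x : EuclideanSpace ℝ (Fin n),
      ‖gradient (fun y => Real.log (pt y)) x - gradient (fun y => Real.log (qt y)) x‖
        ≤ s⁻¹ * (2 * ε * R) := by
    intro x
    rw [hgradp x, hgradq x]
    have heq : (s⁻¹ • up x - s⁻¹ • x) - (s⁻¹ • uq x - s⁻¹ • x) = s⁻¹ • (up x - uq x) := by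
      module
    rw [heq, norm_smul, Real.norm_eq_abs, abs_of_pos (by positivity)]
    calc s⁻¹ * ‖up x - uq x‖ ≤ s⁻¹ * (‖up x‖ + ‖uq x‖) :=
          mul_le_mul_of_nonneg_left (norm_sub_le _ _) (by positivity)
      _ ≤ s⁻¹ * (ε * R + ε * R) :=
          mul_le_mul_of_nonneg_left (add_le_add (hup x) (huq x)) (by positivity)
      _ = s⁻¹ * (2 * ε * R) := by ring
  have hpb : ∀ x, pt x *
      ‖gradient (fun y => Real.log (pt y)) x - gradient (fun y => Real.log (qt y)) x‖ ^ 2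
        ≤ pt x * C := by
    intro x
    refine mul_le_mul_of_nonneg_left ?_ (hptnn x)
    rw [hC_def]
    exact pow_le_pow_left₀ (norm_nonneg _) (hdiff x) 2
  calc (∫ x, pt x *
        ‖gradient (fun y => Real.log (pt y)) x - gradient (fun y => Real.log (qt y)) x‖ ^ 2)
      ≤ ∫ x, pt x * C := by
        refine integral_mono_of_nonneg ?_ (hptInt.mul_const C) ?_
        · exact Filter.Eventually.of_forall fun x => by
            have := hptnn x
            positivity
        · exact Filter.Eventually.of_forall hpb
    _ = (∫ x, pt x) * C := integral_mul_const _ _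
    _ = C := by rw [hptOne, one_mul]
    _ = 4 * R ^ 2 * Real.exp (-2 * t) / s ^ 2 := by
        have hε2 : ε ^ 2 = rexp (-2 * t) := by
          rw [hε_def, sq, ← Real.exp_add]
          congr 1
          ring
        rw [hC_def]
        field_simp
        rw [show (-(2 * t)) = -2 * t by ring, ← hε2]
        ring
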